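/- (Lemma 5.1, inclusion 𝒞 ⊆ 𝒮_k.) Let I be an ideal of ℝ[x] = MvPolynomial (Fin n) ℝ, let z : Fin d → ℝ[x], let M₁ ∈ ℝ^{d×d} be a symmetric Gram matrix for 1 with respect to z mod I, let w : Fin e → ℝ[x], and let N : Fin e → ℝ^{d×d} assign to each i a symmetric Gram matrix N i for the polynomial w i with respect to z mod I. Then for every x ∈ V_ℝ(I) there exists a positive semidefinite matrix X ∈ ℝ^{d×d} (namely X = z(x)·z(x)ᵀ, the outer product of the evaluation vector with itself) with ⟨M₁, X⟩ = 1 and ⟨N i, X⟩ = eval x (w i) for every i; that is, the point (eval x (w 1), …, eval x (w e)) lies in the spectratope {(⟨N 1, X⟩,…,⟨N e, X⟩) : X PSD, ⟨M₁, X⟩ = 1}. -/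

import Mathlib

open MvPolynomial Matrix

theorem aux_trace {d : ℕ} (A : Matrix (Fin d) (Fin d) ℝ) (v : Fin d → ℝ) :
    Matrix.trace (Aᵀ * Matrix.of (fun k l => v k * v l)) = ∑ k, ∑ l, A k l * (v k * v l) := by
  simp only [Matrix.trace, Matrix.diag, Matrix.mul_apply, Matrix.transpose_apply, Matrix.of_apply]
  rw [Finset.sum_comm]


theorem variety_point_in_spectratope {n d e : ℕ}
    (I : Ideal (MvPolynomial (Fin n) ℝ))
    (z : Fin d → MvPolynomial (Fin n) ℝ)
    (M₁ : Matrix (Fin d) (Fin d) ℝ) (hM₁sym : M₁ᵀ = M₁)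
    (hM₁g : (1 : MvPolynomial (Fin n) ℝ) - ∑ i, ∑ j, M₁ i j • (z i * z j) ∈ I)
    (w : Fin e → MvPolynomial (Fin n) ℝ)
    (N : Fin e → Matrix (Fin d) (Fin d) ℝ)
    (hNsym : ∀ i, (N i)ᵀ = N i)
    (hNg : ∀ i, w i - ∑ k, ∑ l, N i k l • (z k * z l) ∈ I) :
    ∀ x : Fin n → ℝ, (∀ g ∈ I, eval x g = 0) →
      ∃ X : Matrix (Fin d) (Fin d) ℝ,
        X = Matrix.of (fun k l => eval x (z k) * eval x (z l)) ∧
        X.PosSemidef ∧ Matrix.trace (M₁ᵀ * X) = 1 ∧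
        ∀ i, Matrix.trace ((N i)ᵀ * X) = eval x (w i) := by
  intro x hx
  set v : Fin d → ℝ := fun k => eval x (z k) with hv
  refine ⟨Matrix.of (fun k l => v k * v l), rfl, ?_, ?_, ?_⟩
  · rw [Matrix.posSemidef_iff_dotProduct_mulVec]; constructor
    · ext k l
      simp [Matrix.conjTranspose_apply, mul_comm]
    · intro y
      have : (Matrix.of (fun k l => v k * v l)).mulVec y = fun k => v k * (∑ l, v l * y l) := by
        ext k
        simp [Matrix.mulVec, dotProduct, Finset.mul_sum, mul_assoc]
      rw [this]
      have : (star y) ⬝ᵥ (fun k => v k * (∑ l, v l * y l)) = (∑ l, v l * y l) ^ 2 := by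
        simp only [dotProduct, RCLike.star_def, Pi.star_apply, star_trivial]
        rw [sq, Finset.sum_mul]
        congr 1; ext k; ring
      rw [this]
      positivity
  · have h := hx _ hM₁g
    rw [aux_trace]
    simp only [map_sub, map_sum, _root_.map_one, smul_eval, _root_.map_mul] at h
    linarith [h]
  · intro i
    have h := hx _ (hNg i)
    rw [aux_trace]
    simp only [map_sub, map_sum, smul_eval, _root_.map_mul] at h
    linarith [h]
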